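/- Let S be a numerical semigroup on a compound sequence. Then the genus of S, i.e., |ℕ \ S|, equals (1 − n_0 + Σ_{j=1}^p n_j(a_j − 1))/2. -/

import Mathlib

open Finset

def cs18N (a b : ℕ → ℕ) (p j : ℕ) : ℕ :=
  (∏ i ∈ Finset.Icc 1 j, b i) * ∏ i ∈ Finset.Icc (j+1) p, a i

lemma cs18N_succ (a b : ℕ → ℕ) (p j : ℕ) (h : j ≤ p) :
    cs18N a b (p+1) j = cs18N a b p j * a (p+1) := by
  unfold cs18N
  rw [Finset.prod_Icc_succ_top (by omega : j + 1 ≤ p + 1)]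
  ring

lemma cs18N_top (a b : ℕ → ℕ) (p : ℕ) :
    cs18N a b p p = ∏ i ∈ Finset.Icc 1 p, b i := by
  unfold cs18N
  rw [Finset.Icc_eq_empty (by omega : ¬ (p+1 ≤ p))]
  simp

lemma cs18N_zero (a b : ℕ → ℕ) (p : ℕ) :
    cs18N a b p 0 = ∏ i ∈ Finset.Icc 1 p, a i := by
  unfold cs18N
  simp

lemma cs18N_step (a b : ℕ → ℕ) (p : ℕ) :
    a (p+1) * cs18N a b (p+1) (p+1) = b (p+1) * cs18N a b (p+1) p := by
  rw [cs18N_top]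
  unfold cs18N
  rw [Finset.prod_Icc_succ_top (by omega : (1:ℕ) ≤ p + 1)]
  simp [Finset.Icc_self]
  ring

lemma cs18_sum_split (p : ℕ) (f : ℕ → ℕ) :
    ∑ j ∈ Finset.range (p+1), f j = f 0 + ∑ j ∈ Finset.Icc 1 p, f j := by
  have h : Finset.range (p+1) = insert 0 (Finset.Icc 1 p) := by
    ext j; simp; omega
  rw [h, Finset.sum_insert (by simp)]
lemma cs18_reduce (p : ℕ) (a b : ℕ → ℕ) (hpos : ∀ i, 1 ≤ i → i ≤ p → 0 < a i)
    (y : ℕ → ℕ) :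
    ∃ x : ℕ → ℕ, ∃ k : ℕ, (∀ j, 1 ≤ j → j ≤ p → x j < a j) ∧
      ∑ j ∈ Finset.range (p+1), y j * cs18N a b p j
        = (∑ j ∈ Finset.Icc 1 p, x j * cs18N a b p j) + k * cs18N a b p 0 := by
  induction p generalizing y with
  | zero =>
    refine ⟨y, y 0, by omega, ?_⟩
    simp [cs18N]
  | succ p ih =>
    have hA : 0 < a (p+1) := hpos (p+1) (by omega) le_rfl
    set q := y (p+1) / a (p+1) with hq
    set r := y (p+1) % a (p+1) with hr
    set y' : ℕ → ℕ := fun j => if j = p then y p + q * b (p+1) else y j with hy'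
    obtain ⟨x, k, hbox, hsum⟩ := ih (fun i h1 h2 => hpos i h1 (by omega)) y'
    refine ⟨fun j => if j = p+1 then r else x j, k, ?_, ?_⟩
    · intro j h1 h2
      by_cases hj : j = p+1
      · simp only [hj, if_pos rfl]
        exact Nat.mod_lt _ hA
      · simp only [if_neg hj]
        exact hbox j h1 (by omega)
    · have e1 : ∑ j ∈ Finset.range (p+1+1), y j * cs18N a b (p+1) j
          = (∑ j ∈ Finset.range (p+1), y j * cs18N a b (p+1) j)
            + y (p+1) * cs18N a b (p+1) (p+1) := Finset.sum_range_succ _ _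
      have e2 : y (p+1) * cs18N a b (p+1) (p+1)
          = q * (b (p+1) * cs18N a b (p+1) p) + r * cs18N a b (p+1) (p+1) := by
        rw [← cs18N_step]
        have : q * a (p+1) + r = y (p+1) := by
          rw [hq, hr, mul_comm]; exact Nat.div_add_mod _ _
        calc y (p+1) * cs18N a b (p+1) (p+1)
            = (q * a (p+1) + r) * cs18N a b (p+1) (p+1) := by rw [this]
          _ = q * (a (p+1) * cs18N a b (p+1) (p+1)) + r * cs18N a b (p+1) (p+1) := by ring
      have e3 : (∑ j ∈ Finset.range (p+1), y j * cs18N a b (p+1) j)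
            + q * (b (p+1) * cs18N a b (p+1) p)
          = ∑ j ∈ Finset.range (p+1), y' j * cs18N a b (p+1) j := by
        rw [Finset.sum_range_succ, Finset.sum_range_succ]
        have h1 : ∑ j ∈ Finset.range p, y' j * cs18N a b (p+1) j
            = ∑ j ∈ Finset.range p, y j * cs18N a b (p+1) j := by
          apply Finset.sum_congr rfl
          intro j hj
          simp only [Finset.mem_range] at hj
          simp only [hy', if_neg (show j ≠ p by omega)]
        rw [h1]
        simp only [hy', if_pos rfl]
        ring
      have e4 : ∑ j ∈ Finset.range (p+1), y' j * cs18N a b (p+1) j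
          = (∑ j ∈ Finset.range (p+1), y' j * cs18N a b p j) * a (p+1) := by
        rw [Finset.sum_mul]
        apply Finset.sum_congr rfl
        intro j hj
        simp only [Finset.mem_range] at hj
        rw [cs18N_succ a b p j (by omega)]
        ring
      have e5 : (∑ j ∈ Finset.Icc 1 (p+1), (if j = p+1 then r else x j) * cs18N a b (p+1) j)
          = (∑ j ∈ Finset.Icc 1 p, x j * cs18N a b p j) * a (p+1)
            + r * cs18N a b (p+1) (p+1) := by
        rw [Finset.sum_Icc_succ_top (by omega : (1:ℕ) ≤ p+1), if_pos rfl]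
        congr 1
        rw [Finset.sum_mul]
        apply Finset.sum_congr rfl
        intro j hj
        simp only [Finset.mem_Icc] at hj
        rw [if_neg (by omega), cs18N_succ a b p j (by omega)]
        ring
      rw [e1, e2, ← add_assoc, e3, e4, hsum, e5, cs18N_succ a b p 0 (by omega)]
      ring

lemma cs18_unique (p : ℕ) (a b : ℕ → ℕ)
    (hpos : ∀ i, 1 ≤ i → i ≤ p → 0 < a i)
    (hcop : ∀ i j, 1 ≤ j → j ≤ i → i ≤ p → Nat.Coprime (a i) (b j))
    (x y : ℕ → ℕ)
    (hx : ∀ j, 1 ≤ j → j ≤ p → x j < a j)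
    (hy : ∀ j, 1 ≤ j → j ≤ p → y j < a j)
    (h : (∑ j ∈ Finset.Icc 1 p, x j * cs18N a b p j)
        ≡ (∑ j ∈ Finset.Icc 1 p, y j * cs18N a b p j) [MOD cs18N a b p 0]) :
    ∀ j, 1 ≤ j → j ≤ p → x j = y j := by
  induction p generalizing x y with
  | zero => intro j h1 h2; omega
  | succ p ih =>
    have hA : 0 < a (p+1) := hpos (p+1) (by omega) le_rfl
    -- split sums
    rw [Finset.sum_Icc_succ_top (by omega : (1:ℕ) ≤ p+1),
        Finset.sum_Icc_succ_top (by omega : (1:ℕ) ≤ p+1)] at h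
    have hsx : ∑ j ∈ Finset.Icc 1 p, x j * cs18N a b (p+1) j
        = (∑ j ∈ Finset.Icc 1 p, x j * cs18N a b p j) * a (p+1) := by
      rw [Finset.sum_mul]
      refine Finset.sum_congr rfl fun j hj => ?_
      simp only [Finset.mem_Icc] at hj
      rw [cs18N_succ a b p j (by omega)]; ring
    have hsy : ∑ j ∈ Finset.Icc 1 p, y j * cs18N a b (p+1) j
        = (∑ j ∈ Finset.Icc 1 p, y j * cs18N a b p j) * a (p+1) := by
      rw [Finset.sum_mul]
      refine Finset.sum_congr rfl fun j hj => ?_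
      simp only [Finset.mem_Icc] at hj
      rw [cs18N_succ a b p j (by omega)]; ring
    have hmod : cs18N a b (p+1) 0 = cs18N a b p 0 * a (p+1) := cs18N_succ a b p 0 (by omega)
    rw [hsx, hsy, hmod] at h
    -- reduce mod a (p+1)
    have hB : Nat.Coprime (a (p+1)) (cs18N a b (p+1) (p+1)) := by
      rw [cs18N_top]
      exact Nat.Coprime.prod_right fun j hj => by
        simp only [Finset.mem_Icc] at hj
        exact hcop (p+1) j hj.1 hj.2 le_rfl
    have htop : x (p+1) = y (p+1) := by
      have hd : a (p+1) ∣ cs18N a b p 0 * a (p+1) := dvd_mul_left _ _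
      have h' := Nat.ModEq.of_dvd hd h
      have hx0 : (∑ j ∈ Finset.Icc 1 p, x j * cs18N a b p j) * a (p+1) ≡ 0 [MOD a (p+1)] :=
        Nat.modEq_zero_iff_dvd.mpr (dvd_mul_left _ _)
      have hy0 : (∑ j ∈ Finset.Icc 1 p, y j * cs18N a b p j) * a (p+1) ≡ 0 [MOD a (p+1)] :=
        Nat.modEq_zero_iff_dvd.mpr (dvd_mul_left _ _)
      have h'' : x (p+1) * cs18N a b (p+1) (p+1) ≡ y (p+1) * cs18N a b (p+1) (p+1)
          [MOD a (p+1)] := (hx0.trans hy0.symm).add_left_cancel h'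
      have h3 := Nat.ModEq.cancel_right_of_coprime (by exact hB) h''
      have := h3
      unfold Nat.ModEq at this
      rw [Nat.mod_eq_of_lt (hx (p+1) (by omega) le_rfl),
          Nat.mod_eq_of_lt (hy (p+1) (by omega) le_rfl)] at this
      exact this
    rw [htop] at h
    have h4 := Nat.ModEq.add_right_cancel' _ h
    have h5 := Nat.ModEq.mul_right_cancel' (by omega : a (p+1) ≠ 0) h4
    intro j h1 h2
    by_cases hj : j = p+1
    · rw [hj]; exact htop
    · exact ih (fun i u v => hpos i u (by omega))
        (fun i j u v w => hcop i j u v (by omega)) x y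
        (fun i u v => hx i u (by omega)) (fun i u v => hy i u (by omega)) h5 j h1 (by omega)

lemma cs18_exists (p : ℕ) (a b : ℕ → ℕ)
    (hpos : ∀ i, 1 ≤ i → i ≤ p → 0 < a i)
    (hcop : ∀ i j, 1 ≤ j → j ≤ i → i ≤ p → Nat.Coprime (a i) (b j))
    (m : ℤ) :
    ∃ x : ℕ → ℕ, (∀ j, 1 ≤ j → j ≤ p → x j < a j) ∧
      ((∑ j ∈ Finset.Icc 1 p, x j * cs18N a b p j : ℕ) : ℤ)
        ≡ m [ZMOD (cs18N a b p 0 : ℕ)] := by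
  induction p generalizing m with
  | zero =>
    refine ⟨fun _ => 0, by omega, ?_⟩
    have h1 : cs18N a b 0 0 = 1 := by simp [cs18N]
    rw [h1]
    exact (Int.modEq_iff_dvd.mpr (one_dvd _))
  | succ p ih =>
    have hA : 0 < a (p+1) := hpos (p+1) (by omega) le_rfl
    set A : ℤ := (a (p+1) : ℤ) with hAdef
    have hApos : (0:ℤ) < A := by rw [hAdef]; exact_mod_cast hA
    set B : ℕ := cs18N a b (p+1) (p+1) with hBdef
    have hB : Nat.Coprime (a (p+1)) B := by
      rw [hBdef, cs18N_top]
      exact Nat.Coprime.prod_right fun j hj => by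
        simp only [Finset.mem_Icc] at hj
        exact hcop (p+1) j hj.1 hj.2 le_rfl
    have hcoz : IsCoprime (B : ℤ) A := by
      rw [Int.isCoprime_iff_gcd_eq_one]
      exact_mod_cast Nat.Coprime.symm hB
    obtain ⟨u, v, huv⟩ := hcoz
    set t : ℤ := (u * m) % A with htdef
    have ht0 : 0 ≤ t := Int.emod_nonneg _ (by positivity)
    have htA : t < A := Int.emod_lt_of_pos _ hApos
    have htm : t * (B:ℤ) ≡ m [ZMOD A] := by
      have h1 : t ≡ u * m [ZMOD A] := Int.emod_emod_of_dvd _ dvd_rfl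
      have h2 : t * (B:ℤ) ≡ u * m * B [ZMOD A] := h1.mul_right _
      refine h2.trans (Int.modEq_iff_dvd.mpr ⟨m*v, by linear_combination (-m) * huv⟩)
    have hdvd : A ∣ m - t * B := Int.modEq_iff_dvd.mp htm
    obtain ⟨m2, hm2⟩ := hdvd
    obtain ⟨x, hbox, hmx⟩ := ih (fun i h1 h2 => hpos i h1 (by omega))
      (fun i j u v w => hcop i j u v (by omega)) m2
    refine ⟨fun j => if j = p+1 then t.toNat else x j, ?_, ?_⟩
    · intro j h1 h2
      by_cases hj : j = p+1
      · simp only [hj, if_pos rfl]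
        have : (t.toNat : ℤ) < A := by rwa [Int.toNat_of_nonneg ht0]
        rw [hAdef] at this
        exact_mod_cast this
      · simp only [if_neg hj]
        exact hbox j h1 (by omega)
    · have hcast : ((∑ j ∈ Finset.Icc 1 (p+1),
          (if j = p+1 then t.toNat else x j) * cs18N a b (p+1) j : ℕ) : ℤ)
          = ((∑ j ∈ Finset.Icc 1 p, x j * cs18N a b p j : ℕ) : ℤ) * A + t * B := by
        rw [Finset.sum_Icc_succ_top (by omega : (1:ℕ) ≤ p+1), if_pos rfl]
        have h5 : ∑ j ∈ Finset.Icc 1 p, (if j = p+1 then t.toNat else x j) * cs18N a b (p+1) j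
            = (∑ j ∈ Finset.Icc 1 p, x j * cs18N a b p j) * a (p+1) := by
          rw [Finset.sum_mul]
          refine Finset.sum_congr rfl fun j hj => ?_
          simp only [Finset.mem_Icc] at hj
          rw [if_neg (by omega), cs18N_succ a b p j (by omega)]
          ring
        rw [h5]
        push_cast [Int.toNat_of_nonneg ht0]
        rw [hAdef, hBdef]
      rw [hcast]
      have hmodcast : ((cs18N a b (p+1) 0 : ℕ) : ℤ) = ((cs18N a b p 0 : ℕ) : ℤ) * A := by
        rw [cs18N_succ a b p 0 (by omega), hAdef]
        push_cast
        ring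
      rw [hmodcast]
      have h6 : ((∑ j ∈ Finset.Icc 1 p, x j * cs18N a b p j : ℕ) : ℤ) * A
          ≡ m2 * A [ZMOD ((cs18N a b p 0 : ℕ) : ℤ) * A] := hmx.mul_right' 
      have h7 : m2 * A + t * B = m := by rw [mul_comm] at hm2; linarith
      calc ((∑ j ∈ Finset.Icc 1 p, x j * cs18N a b p j : ℕ) : ℤ) * A + t * B
          ≡ m2 * A + t * B [ZMOD ((cs18N a b p 0 : ℕ) : ℤ) * A] := h6.add_right _
        _ = m := h7

lemma cs18_mem (p : ℕ) (a b : ℕ → ℕ)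
    (hpos : ∀ i, 1 ≤ i → i ≤ p → 0 < a i)
    (hcop : ∀ i j, 1 ≤ j → j ≤ i → i ≤ p → Nat.Coprime (a i) (b j))
    (n : ℕ → ℕ) (hnN : ∀ i, i ≤ p → n i = cs18N a b p i) (hn0 : 0 < n 0)
    (m : ℕ) (x : ℕ → ℕ) (k : ℤ)
    (hbox : ∀ j, 1 ≤ j → j ≤ p → x j < a j)
    (hmk : (m:ℤ) = ((∑ j ∈ Finset.Icc 1 p, x j * n j : ℕ) : ℤ) + k * n 0) :
    (∃ y : ℕ → ℕ, ∑ j ∈ Finset.range (p+1), y j * n j = m) ↔ 0 ≤ k := by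
  have hIcc : ∀ z : ℕ → ℕ, ∑ j ∈ Finset.Icc 1 p, z j * n j
      = ∑ j ∈ Finset.Icc 1 p, z j * cs18N a b p j := by
    intro z
    refine Finset.sum_congr rfl fun j hj => ?_
    simp only [Finset.mem_Icc] at hj
    rw [hnN j hj.2]
  constructor
  · rintro ⟨y, hy⟩
    have hy' : ∑ j ∈ Finset.range (p+1), y j * cs18N a b p j = m := by
      rw [← hy]
      refine Finset.sum_congr rfl fun j hj => ?_
      simp only [Finset.mem_range] at hj
      rw [hnN j (by omega)]
    obtain ⟨x', k', hbox', heq⟩ := cs18_reduce p a b hpos y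
    rw [hy'] at heq
    -- x = x' via uniqueness
    have hmodx : ((∑ j ∈ Finset.Icc 1 p, x j * cs18N a b p j : ℕ) : ℤ)
        ≡ (m : ℤ) [ZMOD (cs18N a b p 0 : ℕ)] := by
      rw [Int.modEq_iff_dvd]
      refine ⟨k, ?_⟩
      rw [hmk, hIcc x, hnN 0 (by omega)]
      ring
    have hmodx' : ((∑ j ∈ Finset.Icc 1 p, x' j * cs18N a b p j : ℕ) : ℤ)
        ≡ (m : ℤ) [ZMOD (cs18N a b p 0 : ℕ)] := by
      rw [Int.modEq_iff_dvd]
      refine ⟨(k' : ℤ), ?_⟩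
      have : (m : ℤ) = (∑ j ∈ Finset.Icc 1 p, x' j * cs18N a b p j : ℕ)
          + (k' : ℤ) * (cs18N a b p 0 : ℕ) := by exact_mod_cast congrArg (Nat.cast : ℕ → ℤ) heq
      rw [this]; ring
    have huniq := cs18_unique p a b hpos hcop x x' hbox hbox'
      (Int.natCast_modEq_iff.mp (hmodx.trans hmodx'.symm))
    have hcc : ∑ j ∈ Finset.Icc 1 p, x j * cs18N a b p j
        = ∑ j ∈ Finset.Icc 1 p, x' j * cs18N a b p j := by
      refine Finset.sum_congr rfl fun j hj => ?_
      simp only [Finset.mem_Icc] at hj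
      rw [huniq j hj.1 hj.2]
    -- now k = k'
    have hk : k * n 0 = (k' : ℤ) * n 0 := by
      have h1 : (m : ℤ) = (∑ j ∈ Finset.Icc 1 p, x j * cs18N a b p j : ℕ)
          + (k' : ℤ) * (cs18N a b p 0 : ℕ) := by
        rw [hcc]; exact_mod_cast congrArg (Nat.cast : ℕ → ℤ) heq
      rw [hnN 0 (by omega)]
      rw [hmk, hIcc x] at h1
      rw [hnN 0 (by omega)] at h1
      linarith
    have : k = (k' : ℤ) := by
      have hn0' : (n 0 : ℤ) ≠ 0 := by exact_mod_cast hn0.ne'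
      exact mul_right_cancel₀ hn0' hk
    rw [this]; positivity
  · intro hk
    refine ⟨fun j => if j = 0 then k.toNat else x j, ?_⟩
    rw [cs18_sum_split p (fun j => (if j = 0 then k.toNat else x j) * n j)]
    simp only [if_pos rfl]
    have h2 : ∑ j ∈ Finset.Icc 1 p, (if j = 0 then k.toNat else x j) * n j
        = ∑ j ∈ Finset.Icc 1 p, x j * n j := by
      refine Finset.sum_congr rfl fun j hj => ?_
      simp only [Finset.mem_Icc] at hj
      rw [if_neg (by omega)]
    rw [h2]
    have h4 : ((k.toNat * n 0 + ∑ j ∈ Finset.Icc 1 p, x j * n j : ℕ) : ℤ) = (m : ℤ) := by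
      push_cast [Int.toNat_of_nonneg hk] at hmk ⊢
      linarith
    exact Nat.cast_injective h4

theorem stmt18 (p : ℕ) (hp : 1 ≤ p) (a b : ℕ → ℕ)
    (ha : ∀ i, 1 ≤ i → i ≤ p → 2 ≤ a i ∧ a i < b i)
    (hab : ∀ i j, 1 ≤ j → j ≤ i → i ≤ p → Nat.gcd (a i) (b j) = 1)
    (n : ℕ → ℕ)
    (hn : ∀ i, i ≤ p → n i = (∏ j ∈ Finset.Icc 1 i, b j) * ∏ j ∈ Finset.Icc (i+1) p, a j) :
    2 * Set.ncard {m : ℕ | ¬∃ x : ℕ → ℕ, ∑ j ∈ Finset.range (p+1), x j * n j = m}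
      + n 0 = 1 + ∑ j ∈ Finset.Icc 1 p, n j * (a j - 1) := by
  classical
  have hnN : ∀ i, i ≤ p → n i = cs18N a b p i := fun i hi => hn i hi
  have hpos : ∀ i, 1 ≤ i → i ≤ p → 0 < a i := fun i h1 h2 => by
    have := (ha i h1 h2).1; omega
  have hcop : ∀ i j, 1 ≤ j → j ≤ i → i ≤ p → Nat.Coprime (a i) (b j) := hab
  have hn0 : 0 < n 0 := by
    rw [hnN 0 (by omega), cs18N_zero]
    refine Finset.prod_pos fun i hi => ?_
    simp only [Finset.mem_Icc] at hi
    exact hpos i hi.1 hi.2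
  set C := ∑ j ∈ Finset.Icc 1 p, (a j - 1) * n j with hCdef
  -- n 0 < C
  have hn0C : n 0 < C := by
    have h1mem : (1:ℕ) ∈ Finset.Icc 1 p := by simp [hp]
    have ht : (a 1 - 1) * n 1 ≤ C :=
      Finset.single_le_sum (f := fun j => (a j - 1) * n j) (fun i _ => Nat.zero_le _) h1mem
    have hsplit : Finset.Icc 1 p = insert 1 (Finset.Icc 2 p) := by
      ext j; simp only [Finset.mem_Icc, Finset.mem_insert]; omega
    have hone : n 0 < n 1 := by
      rw [hnN 0 (by omega), hnN 1 hp, cs18N_zero]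
      unfold cs18N
      rw [hsplit, Finset.prod_insert (by simp)]
      rw [Finset.Icc_self, Finset.prod_singleton]
      have h2 : Finset.Icc (1+1) p = Finset.Icc 2 p := rfl
      rw [h2]
      have hb1 : a 1 < b 1 := (ha 1 le_rfl hp).2
      have happ : 0 < ∏ i ∈ Finset.Icc 2 p, a i := by
        refine Finset.prod_pos fun i hi => ?_
        simp only [Finset.mem_Icc] at hi
        exact hpos i (by omega) hi.2
      exact Nat.mul_lt_mul_of_lt_of_le hb1 le_rfl happ |>.trans_le le_rfl
    have ha1 : 1 ≤ a 1 - 1 := by have := (ha 1 le_rfl hp).1; omega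
    have : n 1 ≤ (a 1 - 1) * n 1 := Nat.le_mul_of_pos_left _ ha1
    omega
  set F := C - n 0 with hFdef
  have hFC : (F : ℤ) = (C : ℤ) - n 0 := by
    rw [hFdef, Nat.cast_sub (le_of_lt hn0C)]
  -- decomposition of any m
  have hdecomp : ∀ m : ℕ, ∃ x : ℕ → ℕ, ∃ k : ℤ,
      (∀ j, 1 ≤ j → j ≤ p → x j < a j) ∧
      (m:ℤ) = ((∑ j ∈ Finset.Icc 1 p, x j * n j : ℕ):ℤ) + k * n 0 := by
    intro m
    obtain ⟨x, hbox, hmod⟩ := cs18_exists p a b hpos hcop m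
    obtain ⟨k, hk⟩ := Int.modEq_iff_dvd.mp hmod
    refine ⟨x, k, hbox, ?_⟩
    have hIcc : ∑ j ∈ Finset.Icc 1 p, x j * n j
        = ∑ j ∈ Finset.Icc 1 p, x j * cs18N a b p j := by
      refine Finset.sum_congr rfl fun j hj => ?_
      simp only [Finset.mem_Icc] at hj
      rw [hnN j hj.2]
    rw [hIcc, hnN 0 (by omega)]
    linarith [hk]
  have hcomp : ∀ x : ℕ → ℕ, (∀ j, 1 ≤ j → j ≤ p → x j < a j) →
      (∑ j ∈ Finset.Icc 1 p, (a j - 1 - x j) * n j)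
        + (∑ j ∈ Finset.Icc 1 p, x j * n j) = C := by
    intro x hbox
    rw [hCdef, ← Finset.sum_add_distrib]
    refine Finset.sum_congr rfl fun j hj => ?_
    simp only [Finset.mem_Icc] at hj
    have h1 := hbox j hj.1 hj.2
    rw [← Nat.add_mul]
    congr 1
    omega
  -- symmetry
  have hsym : ∀ m : ℕ, m ≤ F →
      ((∃ y : ℕ → ℕ, ∑ j ∈ Finset.range (p+1), y j * n j = F - m) ↔
        ¬ (∃ y : ℕ → ℕ, ∑ j ∈ Finset.range (p+1), y j * n j = m)) := by
    intro m hm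
    obtain ⟨x, k, hbox, hmk⟩ := hdecomp m
    have h1 := cs18_mem p a b hpos hcop n hnN hn0 m x k hbox hmk
    have hbox' : ∀ j, 1 ≤ j → j ≤ p → a j - 1 - x j < a j := fun j u v => by
      have := (ha j u v).1; omega
    have hmk' : ((F - m : ℕ):ℤ)
        = ((∑ j ∈ Finset.Icc 1 p, (a j - 1 - x j) * n j : ℕ):ℤ) + (-1 - k) * n 0 := by
      have hc := hcomp x hbox
      have hc2 : ((∑ j ∈ Finset.Icc 1 p, (a j - 1 - x j) * n j : ℕ):ℤ)
          + ((∑ j ∈ Finset.Icc 1 p, x j * n j : ℕ):ℤ) = (C:ℤ) := by exact_mod_cast hc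
      rw [Nat.cast_sub hm, hFC, hmk]
      linarith
    have h2 := cs18_mem p a b hpos hcop n hnN hn0 (F - m) _ (-1 - k) hbox' hmk'
    rw [h1, h2]
    omega
  have hbig : ∀ m : ℕ, F < m →
      (∃ y : ℕ → ℕ, ∑ j ∈ Finset.range (p+1), y j * n j = m) := by
    intro m hm
    obtain ⟨x, k, hbox, hmk⟩ := hdecomp m
    rw [cs18_mem p a b hpos hcop n hnN hn0 m x k hbox hmk]
    by_contra hk
    push_neg at hk
    have hxC : (∑ j ∈ Finset.Icc 1 p, x j * n j) ≤ C := by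
      have := hcomp x hbox; omega
    have h5 : k * (n 0:ℤ) ≤ -1 * n 0 := by
      apply mul_le_mul_of_nonneg_right (by omega) (by positivity)
    have h6 : ((∑ j ∈ Finset.Icc 1 p, x j * n j : ℕ):ℤ) ≤ (C:ℤ) := by exact_mod_cast hxC
    have h7 : (m:ℤ) ≤ (F:ℤ) := by rw [hFC]; linarith [hmk]
    have : m ≤ F := by exact_mod_cast h7
    omega
  -- counting
  set G := Finset.filter
      (fun m => ¬ ∃ y : ℕ → ℕ, ∑ j ∈ Finset.range (p+1), y j * n j = m)
      (Finset.range (F+1)) with hGdef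
  set T := Finset.filter
      (fun m => ∃ y : ℕ → ℕ, ∑ j ∈ Finset.range (p+1), y j * n j = m)
      (Finset.range (F+1)) with hTdef
  have hset : {m : ℕ | ¬∃ x : ℕ → ℕ, ∑ j ∈ Finset.range (p+1), x j * n j = m} = ↑G := by
    ext m
    simp only [hGdef, Finset.coe_filter, Set.mem_setOf_eq, Finset.mem_range]
    constructor
    · intro h
      refine ⟨?_, h⟩
      by_contra hc
      exact h (hbig m (by omega))
    · exact fun h => h.2
  rw [hset, Set.ncard_coe_finset]
  have hcards : T.card + G.card = F + 1 := by
    rw [hGdef, hTdef]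
    rw [Finset.card_filter_add_card_filter_not
      (p := fun m => ∃ y : ℕ → ℕ, ∑ j ∈ Finset.range (p+1), y j * n j = m)]
    exact Finset.card_range (F+1)
  have hbij : G.card = T.card := by
    refine Finset.card_bij (fun m _ => F - m) ?_ ?_ ?_
    · intro m hmG
      simp only [hGdef, Finset.mem_filter, Finset.mem_range] at hmG
      simp only [hTdef, Finset.mem_filter, Finset.mem_range]
      exact ⟨by omega, (hsym m (by omega)).mpr hmG.2⟩
    · intro m1 h1 m2 h2 he
      simp only [hGdef, Finset.mem_filter, Finset.mem_range] at h1 h2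
      omega
    · intro s hs
      simp only [hTdef, Finset.mem_filter, Finset.mem_range] at hs
      refine ⟨F - s, ?_, show F - (F - s) = s by omega⟩
      simp only [hGdef, Finset.mem_filter, Finset.mem_range]
      refine ⟨by omega, ?_⟩
      have h8 := hsym (F - s) (by omega)
      rw [(by omega : F - (F - s) = s)] at h8
      exact h8.mp hs.2
  have hCC : ∑ j ∈ Finset.Icc 1 p, n j * (a j - 1) = C := by
    rw [hCdef]
    exact Finset.sum_congr rfl fun j _ => mul_comm _ _
  rw [hCC]
  omega
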